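/- Let r ≥ 1 and n ≥ 1 be integers. Then the function q ↦ Σ_{k=0}^{∞} (r·q^{r·k} − (n+r)·q^{(r+1)·k}) · [k]^{n−1} (where [k] := (q^k − 1)/(q − 1)), defined for q in the open interval (0,1), tends to the n-th Bernoulli number B_n as q tends to 1 from the left. -/

import Mathlib

open Finset

namespace QB

open Polynomial PowerSeries

noncomputable def Pg (m : ℕ) : Polynomial ℝ := ∑ i ∈ Finset.range m, (1 - Polynomial.X) ^ i

noncomputable def Eps (m : ℕ) : PowerSeries ℝ :=
  1 - PowerSeries.rescale (-(m : ℝ)) (PowerSeries.exp ℝ)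

noncomputable def Bs (m : ℕ) : PowerSeries ℝ :=
  PowerSeries.rescale (-(m : ℝ)) (bernoulliPowerSeries ℝ)

noncomputable def UU : PowerSeries ℝ := Eps 1

lemma Bs_mul_Eps (m : ℕ) : Bs m * Eps m = PowerSeries.C (R := ℝ) (m : ℝ) * PowerSeries.X := by
  have h := congrArg (PowerSeries.rescale (-(m : ℝ))) (bernoulliPowerSeries_mul_exp_sub_one ℝ)
  rw [map_mul, map_sub, map_one, rescale_X] at h
  have : Bs m * (PowerSeries.rescale (-(m : ℝ)) (PowerSeries.exp ℝ) - 1)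
      = PowerSeries.C (R := ℝ) (-(m : ℝ)) * PowerSeries.X := h
  rw [Eps, Bs]
  calc PowerSeries.rescale (-(m : ℝ)) (bernoulliPowerSeries ℝ) *
        (1 - PowerSeries.rescale (-(m : ℝ)) (PowerSeries.exp ℝ))
      = -(PowerSeries.rescale (-(m : ℝ)) (bernoulliPowerSeries ℝ) *
        (PowerSeries.rescale (-(m : ℝ)) (PowerSeries.exp ℝ) - 1)) := by ring
    _ = -(PowerSeries.C (R := ℝ) (-(m : ℝ)) * PowerSeries.X) := by rw [h]
    _ = PowerSeries.C (R := ℝ) (m : ℝ) * PowerSeries.X := by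
        rw [map_neg]; ring

lemma X_mul_Pg (m : ℕ) : Polynomial.X * Pg m = 1 - (1 - Polynomial.X) ^ m := by
  have h := geom_sum_mul (1 - Polynomial.X (R := ℝ)) m
  have : (∑ i ∈ Finset.range m, (1 - Polynomial.X (R := ℝ)) ^ i) * (-Polynomial.X)
      = (1 - Polynomial.X) ^ m - 1 := by
    simpa using h
  rw [Pg]
  linear_combination -this

lemma one_sub_UU_pow (m : ℕ) :
    (1 - UU) ^ m = PowerSeries.rescale (-(m : ℝ)) (PowerSeries.exp ℝ) := by
  have h1 : (1 : PowerSeries ℝ) - UU = PowerSeries.rescale (-(1 : ℝ)) (PowerSeries.exp ℝ) := by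
    simp [UU, Eps]
  rw [h1, ← map_pow, PowerSeries.exp_pow_eq_rescale_exp, PowerSeries.rescale_rescale]
  norm_num

lemma UU_mul_aeval_Pg (m : ℕ) : UU * Polynomial.aeval UU (Pg m) = Eps m := by
  have h := congrArg (Polynomial.aeval UU) (X_mul_Pg m)
  rw [map_mul, map_sub, map_one, map_pow, map_sub, map_one, Polynomial.aeval_X] at h
  rw [h, one_sub_UU_pow, Eps]

lemma Eps_eq_X_mul (m : ℕ) :
    ∃ V, Eps m = PowerSeries.X * V ∧ PowerSeries.constantCoeff (R := ℝ) V = m := by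
  have h0 : PowerSeries.constantCoeff (R := ℝ) (Eps m) = 0 := by
    simp [Eps, PowerSeries.rescale, PowerSeries.constantCoeff_exp]
  obtain ⟨V, hV⟩ := PowerSeries.X_dvd_iff.2 h0
  refine ⟨V, hV, ?_⟩
  have h1 : PowerSeries.coeff (R := ℝ) 1 (Eps m) = m := by
    simp [Eps, PowerSeries.coeff_rescale, PowerSeries.coeff_exp]
  rw [hV] at h1
  rw [PowerSeries.coeff_succ_X_mul] at h1
  simpa using h1

lemma alt_sum_shift (J : ℕ) (f : ℕ → ℝ) :
    ∑ j ∈ Finset.range (J + 2), (-1 : ℝ) ^ j * ((J + 1).choose j : ℝ) * f j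
      = ∑ j ∈ Finset.range (J + 1), (-1 : ℝ) ^ j * (J.choose j : ℝ) * (f j - f (j + 1)) := by
  have hW : ∑ i ∈ Finset.range (J + 2), (-1 : ℝ) ^ i * (J.choose i : ℝ) * f i
      = ∑ i ∈ Finset.range (J + 1), (-1 : ℝ) ^ i * (J.choose i : ℝ) * f i := by
    rw [Finset.sum_range_succ, Nat.choose_succ_self]
    simp
  have hW' : ∑ i ∈ Finset.range (J + 2), (-1 : ℝ) ^ i * (J.choose i : ℝ) * f i
      = (∑ j ∈ Finset.range (J + 1), (-1 : ℝ) ^ (j + 1) * (J.choose (j + 1) : ℝ) * f (j + 1))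
        + f 0 := by
    rw [Finset.sum_range_succ' (fun i => (-1 : ℝ) ^ i * (J.choose i : ℝ) * f i) (J + 1)]
    simp
  rw [Finset.sum_range_succ' (fun j => (-1 : ℝ) ^ j * ((J + 1).choose j : ℝ) * f j) (J + 1)]
  have key : ∀ j, (-1 : ℝ) ^ (j + 1) * ((J + 1).choose (j + 1) : ℝ) * f (j + 1)
      = -((-1 : ℝ) ^ j * (J.choose j : ℝ) * f (j + 1))
        + (-1 : ℝ) ^ (j + 1) * (J.choose (j + 1) : ℝ) * f (j + 1) := by
    intro j
    rw [Nat.choose_succ_succ]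
    push_cast
    ring
  simp only [key]
  rw [Finset.sum_add_distrib]
  have h2 : ∑ j ∈ Finset.range (J + 1), (-1 : ℝ) ^ (j + 1) * (J.choose (j + 1) : ℝ) * f (j + 1)
      = ∑ i ∈ Finset.range (J + 1), (-1 : ℝ) ^ i * (J.choose i : ℝ) * f i - f 0 := by
    have := hW'.symm.trans hW
    linarith [this]
  rw [h2]
  simp only [pow_zero, Nat.choose_zero_right, Nat.cast_one, one_mul]
  have h3 : ∑ j ∈ Finset.range (J + 1), (-1 : ℝ) ^ j * (J.choose j : ℝ) * (f j - f (j + 1))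
      = (∑ j ∈ Finset.range (J + 1), (-1 : ℝ) ^ j * (J.choose j : ℝ) * f j)
        - ∑ j ∈ Finset.range (J + 1), (-1 : ℝ) ^ j * (J.choose j : ℝ) * f (j + 1) := by
    rw [← Finset.sum_sub_distrib]
    apply Finset.sum_congr rfl
    intro j _
    ring
  rw [h3, Finset.sum_neg_distrib]
  ring

lemma coeff_comp_X_add_one (p : Polynomial ℝ) (d k : ℕ) (hd : p.natDegree ≤ d) :
    (p.comp (Polynomial.X + 1)).coeff k
      = ∑ i ∈ Finset.range (d + 1), p.coeff i * (i.choose k : ℝ) := by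
  rw [Polynomial.comp_eq_sum_left]
  rw [Polynomial.sum_over_range' p (fun n => by simp) (d + 1) (by omega)]
  rw [Polynomial.finset_sum_coeff]
  apply Finset.sum_congr rfl
  intro i _
  rw [Polynomial.coeff_C_mul, Polynomial.coeff_X_add_one_pow]

lemma alt_sum_poly (J : ℕ) (p : Polynomial ℝ) (hp : p.natDegree ≤ J) :
    ∑ j ∈ Finset.range (J + 1), (-1 : ℝ) ^ j * (J.choose j : ℝ) * p.eval (j : ℝ)
      = (-1) ^ J * (J.factorial : ℝ) * p.coeff J := by
  induction J generalizing p with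
  | zero =>
    rw [Polynomial.eq_C_of_natDegree_le_zero hp]
    simp
  | succ J ih =>
    set q : Polynomial ℝ := p - p.comp (Polynomial.X + 1) with hq
    have hqd : q.natDegree ≤ J := by
      rw [Polynomial.natDegree_le_iff_coeff_eq_zero]
      intro N hN
      rw [hq, Polynomial.coeff_sub, coeff_comp_X_add_one p (J + 1) N hp]
      rcases eq_or_lt_of_le (Nat.succ_le_of_lt hN) with h | h
      · rw [Finset.sum_eq_single (J + 1)]
        · rw [← h, Nat.choose_self]; simp
        · intro i hi hne
          rw [Nat.choose_eq_zero_of_lt (by simp at hi; omega), Nat.cast_zero, mul_zero]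
        · simp
      · rw [Polynomial.coeff_eq_zero_of_natDegree_lt (by omega), Finset.sum_eq_zero, sub_zero]
        intro i hi
        rw [Nat.choose_eq_zero_of_lt (by simp at hi; omega), Nat.cast_zero, mul_zero]
    have hqc : q.coeff J = -((J + 1 : ℝ)) * p.coeff (J + 1) := by
      rw [hq, Polynomial.coeff_sub, coeff_comp_X_add_one p (J + 1) J hp]
      rw [Finset.sum_range_succ, Finset.sum_range_succ]
      rw [Nat.choose_succ_self_right, Nat.choose_self]
      rw [Finset.sum_eq_zero]
      · push_cast; ring
      · intro i hi
        rw [Nat.choose_eq_zero_of_lt (by simp at hi; omega), Nat.cast_zero, mul_zero]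
    have heval : ∀ j : ℕ, p.eval (j : ℝ) - p.eval ((j + 1 : ℕ) : ℝ) = q.eval (j : ℝ) := by
      intro j
      rw [hq, Polynomial.eval_sub, Polynomial.eval_comp]
      push_cast
      simp
    calc ∑ j ∈ Finset.range (J + 2), (-1 : ℝ) ^ j * ((J + 1).choose j : ℝ) * p.eval (j : ℝ)
        = ∑ j ∈ Finset.range (J + 1), (-1 : ℝ) ^ j * (J.choose j : ℝ)
            * (p.eval (j : ℝ) - p.eval ((j + 1 : ℕ) : ℝ)) := by
          exact alt_sum_shift J (fun j => p.eval (j : ℝ))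
      _ = ∑ j ∈ Finset.range (J + 1), (-1 : ℝ) ^ j * (J.choose j : ℝ) * q.eval (j : ℝ) := by
          apply Finset.sum_congr rfl; intro j _; rw [heval]
      _ = (-1) ^ J * (J.factorial : ℝ) * q.coeff J := ih q hqd
      _ = (-1) ^ (J + 1) * ((J + 1).factorial : ℝ) * p.coeff (J + 1) := by
          rw [hqc, Nat.factorial_succ]
          push_cast
          ring

lemma alt_sum_inv (J : ℕ) (x : ℝ) (hx : 0 < x) :
    ∑ j ∈ Finset.range (J + 1), (-1 : ℝ) ^ j * (J.choose j : ℝ) / (x + j)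
      = (J.factorial : ℝ) / ∏ i ∈ Finset.range (J + 1), (x + i) := by
  induction J generalizing x with
  | zero => simp
  | succ J ih =>
    have hstep : ∑ j ∈ Finset.range (J + 2), (-1 : ℝ) ^ j * ((J + 1).choose j : ℝ) / (x + j)
        = ∑ j ∈ Finset.range (J + 1), (-1 : ℝ) ^ j * (J.choose j : ℝ)
            * ((1 : ℝ) / (x + j) - 1 / (x + (j + 1 : ℕ))) := by
      have := alt_sum_shift J (fun j => 1 / (x + j))
      simp only [mul_one_div] at this ⊢
      exact this
    rw [hstep]
    have hA : (0 : ℝ) < ∏ i ∈ Finset.range (J + 1), (x + i) := by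
      apply Finset.prod_pos; intro i _; positivity
    have hB : (0 : ℝ) < ∏ i ∈ Finset.range (J + 1), ((x + 1) + i) := by
      apply Finset.prod_pos; intro i _; positivity
    have hR : (∏ i ∈ Finset.range (J + 1), (x + i)) * (x + (J + 1))
        = x * ∏ i ∈ Finset.range (J + 1), ((x + 1) + i) := by
      have h1 : ∏ i ∈ Finset.range (J + 2), (x + i)
          = (∏ i ∈ Finset.range (J + 1), (x + i)) * (x + (J + 1)) := by
        rw [Finset.prod_range_succ]; push_cast; ring_nf
      have h2 : ∏ i ∈ Finset.range (J + 2), (x + i)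
          = x * ∏ i ∈ Finset.range (J + 1), ((x + 1) + i) := by
        rw [Finset.prod_range_succ']
        have hterm : ∀ i ∈ Finset.range (J + 1), (x + ((i + 1 : ℕ) : ℝ)) = (x + 1) + i := by
          intro i _; push_cast; ring
        rw [Finset.prod_congr rfl hterm]
        push_cast
        ring
      rw [← h1, h2]
    have split : ∑ j ∈ Finset.range (J + 1), (-1 : ℝ) ^ j * (J.choose j : ℝ)
            * ((1 : ℝ) / (x + j) - 1 / (x + (j + 1 : ℕ)))
        = (∑ j ∈ Finset.range (J + 1), (-1 : ℝ) ^ j * (J.choose j : ℝ) / (x + j))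
          - ∑ j ∈ Finset.range (J + 1), (-1 : ℝ) ^ j * (J.choose j : ℝ) / ((x + 1) + j) := by
      rw [← Finset.sum_sub_distrib]
      apply Finset.sum_congr rfl
      intro j _
      push_cast
      ring
    have h1 : ∏ i ∈ Finset.range (J + 2), (x + (i : ℝ))
        = (∏ i ∈ Finset.range (J + 1), (x + (i : ℝ))) * (x + ((J : ℝ) + 1)) := by
      rw [Finset.prod_range_succ]; push_cast; ring_nf
    rw [split, ih x hx, ih (x + 1) (by linarith), h1]
    have hxJ : (0 : ℝ) < x + ((J : ℝ) + 1) := by positivity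
    rw [div_sub_div _ _ hA.ne' hB.ne', div_eq_div_iff (by positivity) (by positivity)]
    rw [Nat.factorial_succ]
    push_cast
    linear_combination (-(J.factorial : ℝ) * ∏ i ∈ Finset.range (J + 1), (x + (i : ℝ))) * hR


lemma coeff_Bs (m k : ℕ) :
    PowerSeries.coeff (R := ℝ) k (Bs m) = (-(m : ℝ)) ^ k * ((_root_.bernoulli k : ℚ) : ℝ) / k.factorial := by
  rw [Bs, PowerSeries.coeff_rescale, _root_.bernoulliPowerSeries, PowerSeries.coeff_mk]
  have : algebraMap ℚ ℝ (_root_.bernoulli k / k.factorial)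
      = ((_root_.bernoulli k : ℚ) : ℝ) / (k.factorial : ℝ) := by
    rw [eq_div_iff (by positivity)]
    rw [show ((k.factorial : ℕ) : ℝ) = algebraMap ℚ ℝ (k.factorial : ℚ) by simp]
    rw [← map_mul]
    congr 1
    field_simp
    exact eq_ratCast (algebraMap ℚ ℝ) _
  rw [this]
  ring

noncomputable def HH (r n : ℕ) : PowerSeries ℝ :=
  ∑ j ∈ Finset.range n, PowerSeries.C (R := ℝ) ((-1) ^ j * ((n - 1).choose j : ℝ)) *
    (PowerSeries.C (R := ℝ) ((r : ℝ) / ((r : ℝ) + j)) * Bs (r + j)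
      - PowerSeries.C (R := ℝ) (((n : ℝ) + r) / ((r : ℝ) + j + 1)) * Bs (r + j + 1))

lemma coeff_HH (r n k : ℕ) :
    PowerSeries.coeff (R := ℝ) k (HH r n)
      = (((_root_.bernoulli k : ℚ) : ℝ) / k.factorial) *
        ∑ j ∈ Finset.range n, (-1) ^ j * ((n - 1).choose j : ℝ) *
          ((r : ℝ) / ((r : ℝ) + j) * (-((r : ℝ) + j)) ^ k
            - ((n : ℝ) + r) / ((r : ℝ) + j + 1) * (-((r : ℝ) + j + 1)) ^ k) := by
  rw [HH, map_sum, Finset.mul_sum]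
  apply Finset.sum_congr rfl
  intro j _
  rw [PowerSeries.coeff_C_mul, map_sub, PowerSeries.coeff_C_mul, PowerSeries.coeff_C_mul,
    coeff_Bs, coeff_Bs]
  push_cast
  ring

lemma inner_poly (r m k : ℕ) (hr : 1 ≤ r) (hk1 : 1 ≤ k) (hkn : k ≤ m + 1) :
    ∑ j ∈ Finset.range (m + 1), (-1 : ℝ) ^ j * (m.choose j : ℝ) *
        ((r : ℝ) * ((r : ℝ) + j) ^ (k - 1) - (((m : ℝ) + 1) + r) * ((r : ℝ) + j + 1) ^ (k - 1))
      = if k = m + 1 then (-1) ^ (m + 1) * ((m + 1).factorial : ℝ) else 0 := by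
  set p : Polynomial ℝ := Polynomial.C (r : ℝ) * (Polynomial.X + Polynomial.C (r : ℝ)) ^ (k - 1)
    - Polynomial.C ((m : ℝ) + 1 + r) * (Polynomial.X + Polynomial.C ((r : ℝ) + 1)) ^ (k - 1)
    with hp
  have hdeg : p.natDegree ≤ m := by
    apply le_trans (Polynomial.natDegree_sub_le _ _)
    apply max_le
    · apply le_trans (Polynomial.natDegree_C_mul_le _ _)
      apply le_trans (Polynomial.natDegree_pow_le)
      rw [Polynomial.natDegree_X_add_C]
      omega
    · apply le_trans (Polynomial.natDegree_C_mul_le _ _)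
      apply le_trans (Polynomial.natDegree_pow_le)
      rw [Polynomial.natDegree_X_add_C]
      omega
  have heval : ∀ j : ℕ, p.eval (j : ℝ)
      = (r : ℝ) * ((r : ℝ) + j) ^ (k - 1) - (((m : ℝ) + 1) + r) * ((r : ℝ) + j + 1) ^ (k - 1) := by
    intro j
    rw [hp]
    simp only [Polynomial.eval_sub, Polynomial.eval_mul, Polynomial.eval_C, Polynomial.eval_pow,
      Polynomial.eval_add, Polynomial.eval_X]
    ring_nf
  have hcoeff : p.coeff m = if k = m + 1 then -((m : ℝ) + 1) else 0 := by
    rw [hp, Polynomial.coeff_sub, Polynomial.coeff_C_mul, Polynomial.coeff_C_mul,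
      Polynomial.coeff_X_add_C_pow, Polynomial.coeff_X_add_C_pow]
    by_cases hk : k = m + 1
    · subst hk
      simp [Nat.choose_self]
      try ring
    · rw [Nat.choose_eq_zero_of_lt (by omega)]
      simp [hk]
  have := alt_sum_poly m p hdeg
  calc ∑ j ∈ Finset.range (m + 1), (-1 : ℝ) ^ j * (m.choose j : ℝ) *
        ((r : ℝ) * ((r : ℝ) + j) ^ (k - 1) - (((m : ℝ) + 1) + r) * ((r : ℝ) + j + 1) ^ (k - 1))
      = ∑ j ∈ Finset.range (m + 1), (-1 : ℝ) ^ j * (m.choose j : ℝ) * p.eval (j : ℝ) := by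
        apply Finset.sum_congr rfl; intro j _; rw [heval]
    _ = (-1) ^ m * (m.factorial : ℝ) * p.coeff m := this
    _ = if k = m + 1 then (-1) ^ (m + 1) * ((m + 1).factorial : ℝ) else 0 := by
        rw [hcoeff]
        by_cases hk : k = m + 1
        · simp only [hk, if_pos rfl, Nat.factorial_succ]
          push_cast
          ring
        · simp [hk]

lemma inner_zero (r m : ℕ) (hr : 1 ≤ r) :
    ∑ j ∈ Finset.range (m + 1), (-1 : ℝ) ^ j * (m.choose j : ℝ) *
        ((r : ℝ) / ((r : ℝ) + j) - (((m : ℝ) + 1) + r) / ((r : ℝ) + j + 1)) = 0 := by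
  have hrp : (0 : ℝ) < r := by exact_mod_cast hr
  have h1 := alt_sum_inv m (r : ℝ) hrp
  have h2 := alt_sum_inv m ((r : ℝ) + 1) (by linarith)
  have hsplit : ∑ j ∈ Finset.range (m + 1), (-1 : ℝ) ^ j * (m.choose j : ℝ) *
        ((r : ℝ) / ((r : ℝ) + j) - (((m : ℝ) + 1) + r) / ((r : ℝ) + j + 1))
      = (r : ℝ) * ∑ j ∈ Finset.range (m + 1), (-1 : ℝ) ^ j * (m.choose j : ℝ) / ((r : ℝ) + j)
        - (((m : ℝ) + 1) + r) *
          ∑ j ∈ Finset.range (m + 1), (-1 : ℝ) ^ j * (m.choose j : ℝ) / (((r : ℝ) + 1) + j) := by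
    rw [Finset.mul_sum, Finset.mul_sum, ← Finset.sum_sub_distrib]
    apply Finset.sum_congr rfl
    intro j _
    have c1 : ((r : ℝ) + j) ≠ 0 := by positivity
    have c2 : ((r : ℝ) + j + 1) ≠ 0 := by positivity
    field_simp
    ring
  rw [hsplit, h1, h2]
  have hA : (0 : ℝ) < ∏ i ∈ Finset.range (m + 1), ((r : ℝ) + i) := by
    apply Finset.prod_pos; intro i _; positivity
  have hB : (0 : ℝ) < ∏ i ∈ Finset.range (m + 1), (((r : ℝ) + 1) + i) := by
    apply Finset.prod_pos; intro i _; positivity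
  have hR : (∏ i ∈ Finset.range (m + 1), ((r : ℝ) + i)) * ((r : ℝ) + (m + 1))
      = (r : ℝ) * ∏ i ∈ Finset.range (m + 1), (((r : ℝ) + 1) + i) := by
    have e1 : ∏ i ∈ Finset.range (m + 2), ((r : ℝ) + i)
        = (∏ i ∈ Finset.range (m + 1), ((r : ℝ) + i)) * ((r : ℝ) + (m + 1)) := by
      rw [Finset.prod_range_succ]; push_cast; ring_nf
    have e2 : ∏ i ∈ Finset.range (m + 2), ((r : ℝ) + i)
        = (r : ℝ) * ∏ i ∈ Finset.range (m + 1), (((r : ℝ) + 1) + i) := by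
      rw [Finset.prod_range_succ']
      have hterm : ∀ i ∈ Finset.range (m + 1), ((r : ℝ) + ((i + 1 : ℕ) : ℝ)) = ((r : ℝ) + 1) + i := by
        intro i _; push_cast; ring
      rw [Finset.prod_congr rfl hterm]
      push_cast
      ring
    rw [← e1, e2]
  field_simp
  linear_combination -(m.factorial : ℝ) * hR

lemma HH_sum_eq (r m k : ℕ) (hr : 1 ≤ r) (hk1 : 1 ≤ k) :
    ∑ j ∈ Finset.range (m + 1), (-1 : ℝ) ^ j * (m.choose j : ℝ) *
        ((r : ℝ) / ((r : ℝ) + j) * (-((r : ℝ) + j)) ^ k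
          - (((m : ℝ) + 1) + r) / ((r : ℝ) + j + 1) * (-((r : ℝ) + j + 1)) ^ k)
      = (-1) ^ k * ∑ j ∈ Finset.range (m + 1), (-1 : ℝ) ^ j * (m.choose j : ℝ) *
        ((r : ℝ) * ((r : ℝ) + j) ^ (k - 1) - (((m : ℝ) + 1) + r) * ((r : ℝ) + j + 1) ^ (k - 1)) := by
  rw [Finset.mul_sum]
  apply Finset.sum_congr rfl
  intro j _
  have hx : ((r : ℝ) + j) ≠ 0 := by positivity
  have hy : ((r : ℝ) + j + 1) ≠ 0 := by positivity
  have e1 : ((r : ℝ) + j) ^ k = ((r : ℝ) + j) ^ (k - 1) * ((r : ℝ) + j) := by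
    rw [← pow_succ]; congr 1; omega
  have e2 : ((r : ℝ) + j + 1) ^ k = ((r : ℝ) + j + 1) ^ (k - 1) * ((r : ℝ) + j + 1) := by
    rw [← pow_succ]; congr 1; omega
  have n1 : (-((r : ℝ) + j)) ^ k = (-1) ^ k * ((r : ℝ) + j) ^ k := neg_pow _ _
  have n2 : (-((r : ℝ) + j + 1)) ^ k = (-1) ^ k * ((r : ℝ) + j + 1) ^ k := neg_pow _ _
  rw [n1, n2, e1, e2]
  field_simp

lemma HH_coeff_lt (r n : ℕ) (hr : 1 ≤ r) (hn : 1 ≤ n) (k : ℕ) (hk : k < n) :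
    PowerSeries.coeff (R := ℝ) k (HH r n) = 0 := by
  obtain ⟨m, rfl⟩ : ∃ m, n = m + 1 := ⟨n - 1, by omega⟩
  rw [coeff_HH]
  rcases Nat.eq_zero_or_pos k with hk0 | hk1
  · subst hk0
    have : ∑ j ∈ Finset.range (m + 1), (-1 : ℝ) ^ j * (((m + 1 - 1)).choose j : ℝ) *
        ((r : ℝ) / ((r : ℝ) + j) * (-((r : ℝ) + j)) ^ 0
          - (((m + 1 : ℕ) : ℝ) + r) / ((r : ℝ) + j + 1) * (-((r : ℝ) + j + 1)) ^ 0)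
        = ∑ j ∈ Finset.range (m + 1), (-1 : ℝ) ^ j * (m.choose j : ℝ) *
        ((r : ℝ) / ((r : ℝ) + j) - (((m : ℝ) + 1) + r) / ((r : ℝ) + j + 1)) := by
      apply Finset.sum_congr rfl
      intro j _
      simp only [pow_zero, mul_one, Nat.add_sub_cancel]
      push_cast
      ring
    rw [this, inner_zero r m hr, mul_zero]
  · have hconv : ∑ j ∈ Finset.range (m + 1), (-1 : ℝ) ^ j * (((m + 1 - 1)).choose j : ℝ) *
        ((r : ℝ) / ((r : ℝ) + j) * (-((r : ℝ) + j)) ^ k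
          - (((m + 1 : ℕ) : ℝ) + r) / ((r : ℝ) + j + 1) * (-((r : ℝ) + j + 1)) ^ k)
        = ∑ j ∈ Finset.range (m + 1), (-1 : ℝ) ^ j * (m.choose j : ℝ) *
        ((r : ℝ) / ((r : ℝ) + j) * (-((r : ℝ) + j)) ^ k
          - (((m : ℝ) + 1) + r) / ((r : ℝ) + j + 1) * (-((r : ℝ) + j + 1)) ^ k) := by
      apply Finset.sum_congr rfl
      intro j _
      simp only [Nat.add_sub_cancel]
      push_cast
      ring
    rw [hconv, HH_sum_eq r m k hr hk1, inner_poly r m k hr hk1 (by omega),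
      if_neg (by omega : ¬ k = m + 1)]
    simp

lemma HH_coeff_n (r n : ℕ) (hr : 1 ≤ r) (hn : 1 ≤ n) :
    PowerSeries.coeff (R := ℝ) n (HH r n) = ((_root_.bernoulli n : ℚ) : ℝ) := by
  obtain ⟨m, rfl⟩ : ∃ m, n = m + 1 := ⟨n - 1, by omega⟩
  rw [coeff_HH]
  have hconv : ∑ j ∈ Finset.range (m + 1), (-1 : ℝ) ^ j * (((m + 1 - 1)).choose j : ℝ) *
        ((r : ℝ) / ((r : ℝ) + j) * (-((r : ℝ) + j)) ^ (m + 1)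
          - (((m + 1 : ℕ) : ℝ) + r) / ((r : ℝ) + j + 1) * (-((r : ℝ) + j + 1)) ^ (m + 1))
      = ∑ j ∈ Finset.range (m + 1), (-1 : ℝ) ^ j * (m.choose j : ℝ) *
        ((r : ℝ) / ((r : ℝ) + j) * (-((r : ℝ) + j)) ^ (m + 1)
          - (((m : ℝ) + 1) + r) / ((r : ℝ) + j + 1) * (-((r : ℝ) + j + 1)) ^ (m + 1)) := by
    apply Finset.sum_congr rfl
    intro j _
    simp only [Nat.add_sub_cancel]
    push_cast
    ring
  rw [hconv, HH_sum_eq r m (m + 1) hr (by omega), inner_poly r m (m + 1) hr (by omega) le_rfl,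
    if_pos rfl]
  have hfac : (((m + 1).factorial : ℕ) : ℝ) ≠ 0 := by
    exact_mod_cast Nat.factorial_ne_zero (m + 1)
  have hsq : (-1 : ℝ) ^ (m + 1) * (-1 : ℝ) ^ (m + 1) = 1 := by
    rw [← pow_add]
    exact Even.neg_one_pow ⟨m + 1, rfl⟩
  rw [show ((-1 : ℝ) ^ (m + 1) * ((-1 : ℝ) ^ (m + 1) * (((m + 1).factorial : ℕ) : ℝ)))
      = (((m + 1).factorial : ℕ) : ℝ) by rw [← mul_assoc, hsq, one_mul]]
  exact div_mul_cancel₀ _ hfac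

noncomputable def AA (r n : ℕ) : Polynomial ℝ :=
  ∑ j ∈ Finset.range n, Polynomial.C ((-1) ^ j * ((n - 1).choose j : ℝ)) *
    (Polynomial.C (r : ℝ) * ∏ s ∈ (Finset.range (n + 1)).erase j, Pg (r + s)
      - Polynomial.C ((n : ℝ) + r) * ∏ s ∈ (Finset.range (n + 1)).erase (j + 1), Pg (r + s))

lemma prod_erase_eq (r n t : ℕ) (ht : t ∈ Finset.range (n + 1)) :
    UU ^ n * ∏ s ∈ (Finset.range (n + 1)).erase t, Polynomial.aeval UU (Pg (r + s))
      = ∏ s ∈ (Finset.range (n + 1)).erase t, Eps (r + s) := by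
  have hcard : ((Finset.range (n + 1)).erase t).card = n := by
    rw [Finset.card_erase_of_mem ht, Finset.card_range]
    omega
  have : UU ^ n = ∏ _s ∈ (Finset.range (n + 1)).erase t, UU := by
    rw [Finset.prod_const, hcard]
  rw [this, ← Finset.prod_mul_distrib]
  apply Finset.prod_congr rfl
  intro s _
  exact UU_mul_aeval_Pg (r + s)

lemma Bs_prod (r n t : ℕ) (ht : t ∈ Finset.range (n + 1)) :
    Bs (r + t) * ∏ s ∈ Finset.range (n + 1), Eps (r + s)
      = PowerSeries.C (R := ℝ) ((r : ℝ) + t) * PowerSeries.X *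
          ∏ s ∈ (Finset.range (n + 1)).erase t, Eps (r + s) := by
  rw [← Finset.mul_prod_erase (Finset.range (n + 1)) (fun s => Eps (r + s)) ht]
  rw [← mul_assoc, Bs_mul_Eps]
  push_cast
  ring

lemma HH_mul_prod (r n : ℕ) (hr : 1 ≤ r) (hn : 1 ≤ n) :
    HH r n * ∏ s ∈ Finset.range (n + 1), Eps (r + s)
      = PowerSeries.X * (UU ^ n * Polynomial.aeval UU (AA r n)) := by
  rw [HH, AA, map_sum, Finset.mul_sum, Finset.sum_mul]
  rw [Finset.mul_sum]
  apply Finset.sum_congr rfl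
  intro j hj
  have hj1 : j ∈ Finset.range (n + 1) := by simp at hj ⊢; omega
  have hj2 : j + 1 ∈ Finset.range (n + 1) := by simp at hj ⊢; omega
  have e1 := Bs_prod r n j hj1
  have e2 := Bs_prod r n (j + 1) hj2
  have f1 := prod_erase_eq r n j hj1
  have f2 := prod_erase_eq r n (j + 1) hj2
  have hne1 : ((r : ℝ) + j) ≠ 0 := by positivity
  have hne2 : ((r : ℝ) + j + 1) ≠ 0 := by positivity
  have g1 : PowerSeries.C (R := ℝ) ((r : ℝ) / ((r : ℝ) + j)) * PowerSeries.C (R := ℝ) ((r : ℝ) + j)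
      = PowerSeries.C (R := ℝ) (r : ℝ) := by
    rw [← map_mul]
    congr 1
    field_simp
  have g2 : PowerSeries.C (R := ℝ) (((n : ℝ) + r) / ((r : ℝ) + j + 1)) * PowerSeries.C (R := ℝ) ((r : ℝ) + j + 1)
      = PowerSeries.C (R := ℝ) ((n : ℝ) + r) := by
    rw [← map_mul]
    congr 1
    field_simp
  have haeval : Polynomial.aeval UU (Polynomial.C ((-1) ^ j * ((n - 1).choose j : ℝ)) *
      (Polynomial.C (r : ℝ) * ∏ s ∈ (Finset.range (n + 1)).erase j, Pg (r + s)
        - Polynomial.C ((n : ℝ) + r) * ∏ s ∈ (Finset.range (n + 1)).erase (j + 1), Pg (r + s)))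
      = PowerSeries.C (R := ℝ) ((-1) ^ j * ((n - 1).choose j : ℝ)) *
      (PowerSeries.C (R := ℝ) (r : ℝ) * ∏ s ∈ (Finset.range (n + 1)).erase j,
          Polynomial.aeval UU (Pg (r + s))
        - PowerSeries.C (R := ℝ) ((n : ℝ) + r) * ∏ s ∈ (Finset.range (n + 1)).erase (j + 1),
          Polynomial.aeval UU (Pg (r + s))) := by
    simp only [map_mul, map_sub, map_prod, Polynomial.aeval_C, ← PowerSeries.C_eq_algebraMap]
  rw [haeval]
  have ecast : ((r : ℝ) + (j + 1 : ℕ)) = ((r : ℝ) + j + 1) := by push_cast; ring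
  rw [ecast] at e2
  calc PowerSeries.C (R := ℝ) ((-1) ^ j * ((n - 1).choose j : ℝ)) *
        (PowerSeries.C (R := ℝ) ((r : ℝ) / ((r : ℝ) + j)) * Bs (r + j)
          - PowerSeries.C (R := ℝ) (((n : ℝ) + r) / ((r : ℝ) + j + 1)) * Bs (r + j + 1)) *
        ∏ s ∈ Finset.range (n + 1), Eps (r + s)
      = PowerSeries.C (R := ℝ) ((-1) ^ j * ((n - 1).choose j : ℝ)) *
        (PowerSeries.C (R := ℝ) ((r : ℝ) / ((r : ℝ) + j)) *
          (Bs (r + j) * ∏ s ∈ Finset.range (n + 1), Eps (r + s))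
          - PowerSeries.C (R := ℝ) (((n : ℝ) + r) / ((r : ℝ) + j + 1)) *
          (Bs (r + (j + 1)) * ∏ s ∈ Finset.range (n + 1), Eps (r + s))) := by
        rw [show r + j + 1 = r + (j + 1) from rfl]
        ring
    _ = PowerSeries.C (R := ℝ) ((-1) ^ j * ((n - 1).choose j : ℝ)) *
        (PowerSeries.C (R := ℝ) (r : ℝ) * PowerSeries.X *
            ∏ s ∈ (Finset.range (n + 1)).erase j, Eps (r + s)
          - PowerSeries.C (R := ℝ) ((n : ℝ) + r) * PowerSeries.X *
            ∏ s ∈ (Finset.range (n + 1)).erase (j + 1), Eps (r + s)) := by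
        rw [e1, e2, ← mul_assoc, ← mul_assoc, ← mul_assoc, g1]
        rw [show PowerSeries.C (R := ℝ) (((n : ℝ) + r) / ((r : ℝ) + j + 1)) *
            (PowerSeries.C (R := ℝ) ((r : ℝ) + j + 1) * PowerSeries.X) =
            PowerSeries.C (R := ℝ) (((n : ℝ) + r) / ((r : ℝ) + j + 1)) *
            PowerSeries.C (R := ℝ) ((r : ℝ) + j + 1) * PowerSeries.X by ring, g2]
    _ = PowerSeries.X * (UU ^ n * (PowerSeries.C (R := ℝ) ((-1) ^ j * ((n - 1).choose j : ℝ)) *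
        (PowerSeries.C (R := ℝ) (r : ℝ) * ∏ s ∈ (Finset.range (n + 1)).erase j,
            Polynomial.aeval UU (Pg (r + s))
          - PowerSeries.C (R := ℝ) ((n : ℝ) + r) * ∏ s ∈ (Finset.range (n + 1)).erase (j + 1),
            Polynomial.aeval UU (Pg (r + s))))) := by
        rw [← f1, ← f2]
        ring

lemma UU_decomp : ∃ W, UU = PowerSeries.X * W ∧ PowerSeries.constantCoeff (R := ℝ) W = 1 := by
  obtain ⟨W, h1, h2⟩ := Eps_eq_X_mul 1
  exact ⟨W, h1, by rw [h2]; norm_num⟩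

lemma poly_coeff_vanish (A : Polynomial ℝ) (N : ℕ)
    (hdvd : (PowerSeries.X : PowerSeries ℝ) ^ (N + 1) ∣ Polynomial.aeval UU A) :
    ∀ i ≤ N, A.coeff i = 0 := by
  obtain ⟨W, hW, hW0⟩ := UU_decomp
  have hcoeffU : ∀ i i' : ℕ, i < i' → PowerSeries.coeff (R := ℝ) i (UU ^ i') = 0 := by
    intro i i' h
    rw [hW, mul_pow, PowerSeries.coeff_X_pow_mul', if_neg (by omega)]
  have hdiag : ∀ i : ℕ, PowerSeries.coeff (R := ℝ) i (UU ^ i) = 1 := by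
    intro i
    rw [hW, mul_pow, PowerSeries.coeff_X_pow_mul', if_pos le_rfl, Nat.sub_self,
      PowerSeries.coeff_zero_eq_constantCoeff, map_pow, hW0, one_pow]
  intro i
  induction i using Nat.strong_induction_on with
  | _ i ih =>
    intro hi
    by_cases hdeg : A.natDegree < i
    · exact Polynomial.coeff_eq_zero_of_natDegree_lt hdeg
    · have hc : PowerSeries.coeff (R := ℝ) i (Polynomial.aeval UU A) = 0 := by
        obtain ⟨g, hg⟩ := hdvd
        rw [hg, PowerSeries.coeff_X_pow_mul', if_neg (by omega)]
      rw [Polynomial.aeval_eq_sum_range, map_sum] at hc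
      have hterm : ∀ i' ∈ Finset.range (A.natDegree + 1),
          PowerSeries.coeff (R := ℝ) i (A.coeff i' • UU ^ i')
            = A.coeff i' * PowerSeries.coeff (R := ℝ) i (UU ^ i') := by
        intro i' _
        rw [PowerSeries.coeff_smul, smul_eq_mul]
      rw [Finset.sum_congr rfl hterm] at hc
      rw [Finset.sum_eq_single i] at hc
      · rw [hdiag i] at hc
        simpa using hc
      · intro b hb hne
        rcases lt_or_gt_of_ne hne with hlt | hgt
        · rw [ih b hlt (by omega), zero_mul]
        · rw [hcoeffU i b hgt, mul_zero]
      · intro hnotin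
        exfalso
        exact hnotin (Finset.mem_range.2 (by omega))

lemma AA_decomp (r n : ℕ) (hr : 1 ≤ r) (hn : 1 ≤ n) :
    ∃ Dp : Polynomial ℝ, AA r n
      = Polynomial.C (((_root_.bernoulli n : ℚ) : ℝ) * ∏ s ∈ Finset.range (n + 1), ((r : ℝ) + s))
          * Polynomial.X ^ n + Polynomial.X ^ (n + 1) * Dp := by
  set Bn : ℝ := ((_root_.bernoulli n : ℚ) : ℝ) with hBn
  set Pm : ℝ := ∏ s ∈ Finset.range (n + 1), ((r : ℝ) + s) with hPm
  set A' : Polynomial ℝ := AA r n - Polynomial.C (Bn * Pm) * Polynomial.X ^ n with hA'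
  -- step 1 : X^(n+1) ∣ aeval UU A'
  have hKdvd : (PowerSeries.X : PowerSeries ℝ) ^ (n + 1)
      ∣ HH r n - PowerSeries.C (R := ℝ) Bn * PowerSeries.X ^ n := by
    rw [PowerSeries.X_pow_dvd_iff]
    intro k hk
    rw [map_sub, PowerSeries.coeff_C_mul, PowerSeries.coeff_X_pow]
    rcases lt_or_eq_of_le (Nat.lt_succ_iff.1 hk) with hlt | heq
    · rw [HH_coeff_lt r n hr hn k hlt, if_neg (by omega)]
      simp
    · rw [heq, HH_coeff_n r n hr hn, if_pos rfl]
      simp [hBn]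
  obtain ⟨K, hK⟩ := hKdvd
  have hHH : HH r n = PowerSeries.C (R := ℝ) Bn * PowerSeries.X ^ n + PowerSeries.X ^ (n + 1) * K := by
    linear_combination hK
  have hEprod : ∃ Vp, (∏ s ∈ Finset.range (n + 1), Eps (r + s))
      = PowerSeries.X ^ (n + 1) * Vp ∧ PowerSeries.constantCoeff (R := ℝ) Vp = Pm := by
    choose V hV1 hV2 using Eps_eq_X_mul
    refine ⟨∏ s ∈ Finset.range (n + 1), V (r + s), ?_, ?_⟩
    · rw [Finset.prod_congr rfl (fun s _ => hV1 (r + s)), Finset.prod_mul_distrib,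
        Finset.prod_const, Finset.card_range]
    · rw [map_prod, hPm]
      apply Finset.prod_congr rfl
      intro s _
      rw [hV2]
      push_cast
      ring
  obtain ⟨Vp, hV, hVc⟩ := hEprod
  obtain ⟨W, hW, hW0⟩ := UU_decomp
  have hmain := HH_mul_prod r n hr hn
  -- inner series
  have hinner : (PowerSeries.X : PowerSeries ℝ)
      ∣ PowerSeries.C (R := ℝ) Bn * Vp - PowerSeries.C (R := ℝ) (Bn * Pm) * W ^ (2 * n) := by
    rw [PowerSeries.X_dvd_iff]
    rw [map_sub, map_mul, map_mul, map_pow, hW0, hVc]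
    simp [PowerSeries.constantCoeff_C]
    try ring
  obtain ⟨M1, hM1⟩ := hinner
  have hXne : (PowerSeries.X : PowerSeries ℝ) ^ (n + 1) ≠ 0 :=
    pow_ne_zero _ PowerSeries.X_ne_zero
  have key : (PowerSeries.X : PowerSeries ℝ) ^ (n + 1) * (W ^ n * Polynomial.aeval UU A')
      = PowerSeries.X ^ (n + 1) * (PowerSeries.X ^ (n + 1) * (M1 + K * Vp)) := by
    have lhs1 : (PowerSeries.X : PowerSeries ℝ) ^ (n + 1) * (W ^ n * Polynomial.aeval UU A')
        = PowerSeries.X * (UU ^ n * Polynomial.aeval UU A') := by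
      rw [hW, mul_pow]
      ring
    have haevalA' : Polynomial.aeval UU A'
        = Polynomial.aeval UU (AA r n) - PowerSeries.C (R := ℝ) (Bn * Pm) * UU ^ n := by
      rw [hA', map_sub, map_mul, map_pow, Polynomial.aeval_X, Polynomial.aeval_C,
        ← PowerSeries.C_eq_algebraMap]
    rw [lhs1, haevalA']
    have expand : PowerSeries.X * (UU ^ n *
        (Polynomial.aeval UU (AA r n) - PowerSeries.C (R := ℝ) (Bn * Pm) * UU ^ n))
        = PowerSeries.X * (UU ^ n * Polynomial.aeval UU (AA r n))
          - PowerSeries.C (R := ℝ) (Bn * Pm) * PowerSeries.X * (UU ^ n * UU ^ n) := by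
      ring
    rw [expand, ← hmain, hHH, hV, hW]
    have h2n : (PowerSeries.X * W) ^ n * (PowerSeries.X * W) ^ n
        = PowerSeries.X ^ (2 * n) * W ^ (2 * n) := by
      rw [two_mul, ← pow_add, mul_pow]
    rw [h2n]
    have : (PowerSeries.C (R := ℝ) Bn * PowerSeries.X ^ n + PowerSeries.X ^ (n + 1) * K) *
          (PowerSeries.X ^ (n + 1) * Vp)
        - PowerSeries.C (R := ℝ) (Bn * Pm) * PowerSeries.X * (PowerSeries.X ^ (2 * n) * W ^ (2 * n))
        = PowerSeries.X ^ (2 * n + 1) *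
            (PowerSeries.C (R := ℝ) Bn * Vp - PowerSeries.C (R := ℝ) (Bn * Pm) * W ^ (2 * n))
          + PowerSeries.X ^ (2 * n + 2) * (K * Vp) := by
      have e1 : (PowerSeries.X : PowerSeries ℝ) ^ n * PowerSeries.X ^ (n + 1)
          = PowerSeries.X ^ (2 * n + 1) := by rw [← pow_add]; congr 1; omega
      have e2 : (PowerSeries.X : PowerSeries ℝ) ^ (n + 1) * PowerSeries.X ^ (n + 1)
          = PowerSeries.X ^ (2 * n + 2) := by rw [← pow_add]; congr 1; omega
      have e3 : (PowerSeries.X : PowerSeries ℝ) * PowerSeries.X ^ (2 * n)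
          = PowerSeries.X ^ (2 * n + 1) := by rw [← pow_succ']
      linear_combination (Vp * PowerSeries.C (R := ℝ) Bn) * e1 + (K * Vp) * e2
        - (PowerSeries.C (R := ℝ) (Bn * Pm) * W ^ (2 * n)) * e3
    rw [this, hM1]
    have e4 : (PowerSeries.X : PowerSeries ℝ) ^ (2 * n + 1) * (PowerSeries.X * M1)
        = PowerSeries.X ^ (2 * n + 2) * M1 := by
      rw [← mul_assoc, ← pow_succ]
    rw [e4]
    have e5 : (PowerSeries.X : PowerSeries ℝ) ^ (n + 1) * (PowerSeries.X ^ (n + 1) *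
        (M1 + K * Vp)) = PowerSeries.X ^ (2 * n + 2) * (M1 + K * Vp) := by
      rw [← mul_assoc, ← pow_add]
      congr 2
      omega
    rw [e5]
    ring
  have hWn : W ^ n * Polynomial.aeval UU A' = PowerSeries.X ^ (n + 1) * (M1 + K * Vp) :=
    mul_left_cancel₀ hXne key
  have hudvd : (PowerSeries.X : PowerSeries ℝ) ^ (n + 1) ∣ W ^ n * Polynomial.aeval UU A' :=
    ⟨M1 + K * Vp, hWn⟩
  have hWu : IsUnit (W ^ n) := by
    apply IsUnit.pow
    rw [PowerSeries.isUnit_iff_constantCoeff, hW0]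
    exact isUnit_one
  have hdvd' : (PowerSeries.X : PowerSeries ℝ) ^ (n + 1) ∣ Polynomial.aeval UU A' := by
    obtain ⟨u, hu⟩ := hWu
    obtain ⟨c, hc⟩ := hudvd
    refine ⟨(u⁻¹ : (PowerSeries ℝ)ˣ) * c, ?_⟩
    have : ((u⁻¹ : (PowerSeries ℝ)ˣ) : PowerSeries ℝ) * (W ^ n * Polynomial.aeval UU A')
        = Polynomial.aeval UU A' := by
      rw [← hu, ← mul_assoc, Units.inv_mul, one_mul]
    rw [← this, hc]
    ring
  -- step 2
  have hvanish := poly_coeff_vanish A' n hdvd'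
  have hpolydvd : (Polynomial.X : Polynomial ℝ) ^ (n + 1) ∣ A' := by
    rw [Polynomial.X_pow_dvd_iff]
    intro d hd
    exact hvanish d (by omega)
  obtain ⟨Dp, hDp⟩ := hpolydvd
  refine ⟨Dp, ?_⟩
  have : AA r n = Polynomial.C (Bn * Pm) * Polynomial.X ^ n + A' := by rw [hA']; ring
  rw [this, hDp]

lemma Pg_eval (m : ℕ) (q : ℝ) : (Pg m).eval (1 - q) = ∑ i ∈ Finset.range m, q ^ i := by
  rw [Pg, Polynomial.eval_finset_sum]
  apply Finset.sum_congr rfl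
  intro i _
  rw [Polynomial.eval_pow, Polynomial.eval_sub, Polynomial.eval_one, Polynomial.eval_X]
  norm_num

lemma geom_eval (m : ℕ) (q : ℝ) : 1 - q ^ m = (1 - q) * (Pg m).eval (1 - q) := by
  rw [Pg_eval]
  have h := geom_sum_mul q m
  linear_combination h

lemma tsum_eval (r n : ℕ) (hr : 1 ≤ r) (hn : 1 ≤ n) (q : ℝ) (hq0 : 0 < q) (hq1 : q < 1) :
    (∑' k : ℕ,
        ((r : ℝ) * q ^ (r * k) - ((n : ℝ) + (r : ℝ)) * q ^ ((r + 1) * k)) *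
          ((q ^ k - 1) / (q - 1)) ^ (n - 1))
      = (AA r n).eval (1 - q) /
        ((1 - q) ^ n * ∏ s ∈ Finset.range (n + 1), (Pg (r + s)).eval (1 - q)) := by
  have hu : (0 : ℝ) < 1 - q := by linarith
  have hune : (1 : ℝ) - q ≠ 0 := hu.ne'
  have hqm : ∀ m : ℕ, 1 ≤ m → q ^ m < 1 := by
    intro m hm
    exact pow_lt_one₀ hq0.le hq1 (by omega)
  have hSpos : ∀ m : ℕ, 1 ≤ m → (0 : ℝ) < (Pg m).eval (1 - q) := by
    intro m hm
    rw [Pg_eval]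
    apply Finset.sum_pos
    · intro i _
      positivity
    · exact Finset.nonempty_range_iff.2 (by omega)
  -- step A : pointwise identity
  set g : ℕ → ℕ → ℝ := fun j k =>
    ((-1) ^ j * ((n - 1).choose j : ℝ) / (1 - q) ^ (n - 1)) *
      ((r : ℝ) * (q ^ (r + j)) ^ k - ((n : ℝ) + r) * (q ^ (r + j + 1)) ^ k) with hg
  have stepA : ∀ k : ℕ,
      ((r : ℝ) * q ^ (r * k) - ((n : ℝ) + (r : ℝ)) * q ^ ((r + 1) * k)) *
          ((q ^ k - 1) / (q - 1)) ^ (n - 1)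
        = ∑ j ∈ Finset.range n, g j k := by
    intro k
    have hdivs : (q ^ k - 1) / (q - 1) = (1 - q ^ k) / (1 - q) := by
      rw [div_eq_div_iff (by intro h; apply hune; linarith [sub_eq_zero.1 h]) hune]
      ring
    have hb : (1 - q ^ k) ^ (n - 1)
        = ∑ j ∈ Finset.range n, (-(q ^ k)) ^ j * ((n - 1).choose j : ℝ) := by
      have := add_pow (-(q ^ k)) (1 : ℝ) (n - 1)
      simp only [one_pow, mul_one] at this
      rw [show (1 : ℝ) - q ^ k = -(q ^ k) + 1 by ring, this,
        show n - 1 + 1 = n by omega]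
    rw [hdivs, div_pow, hb, Finset.sum_div, Finset.mul_sum]
    apply Finset.sum_congr rfl
    intro j _
    have p1 : q ^ (r * k) * (q ^ k) ^ j = (q ^ (r + j)) ^ k := by
      rw [← pow_mul, ← pow_add, ← pow_mul]
      congr 1
      ring
    have p2 : q ^ ((r + 1) * k) * (q ^ k) ^ j = (q ^ (r + j + 1)) ^ k := by
      rw [← pow_mul, ← pow_add, ← pow_mul]
      congr 1
      ring
    rw [hg]
    simp only []
    rw [neg_pow, ← p1, ← p2]
    ring
  -- step B : summability
  have hsum : ∀ m : ℕ, 1 ≤ m → Summable (fun k : ℕ => (q ^ m) ^ k) := by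
    intro m hm
    exact summable_geometric_of_lt_one (by positivity) (hqm m hm)
  have hgsum : ∀ j ∈ Finset.range n, Summable (g j) := by
    intro j _
    apply Summable.mul_left
    exact ((hsum (r + j) (by omega)).mul_left _).sub ((hsum (r + j + 1) (by omega)).mul_left _)
  -- step C : tsum computation
  rw [tsum_congr stepA, Summable.tsum_finsetSum hgsum]
  have stepC : ∀ j ∈ Finset.range n, ∑' k : ℕ, g j k
      = ((-1) ^ j * ((n - 1).choose j : ℝ) / (1 - q) ^ (n - 1)) *
        ((r : ℝ) * (1 - q ^ (r + j))⁻¹ - ((n : ℝ) + r) * (1 - q ^ (r + j + 1))⁻¹) := by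
    intro j _
    rw [hg]
    simp only []
    rw [tsum_mul_left]
    congr 1
    rw [Summable.tsum_sub ((hsum (r + j) (by omega)).mul_left _) ((hsum (r + j + 1) (by omega)).mul_left _),
      tsum_mul_left, tsum_mul_left,
      tsum_geometric_of_lt_one (by positivity) (hqm (r + j) (by omega)),
      tsum_geometric_of_lt_one (by positivity) (hqm (r + j + 1) (by omega))]
  rw [Finset.sum_congr rfl stepC]
  -- step D : algebraic identity with AA
  rw [AA, Polynomial.eval_finset_sum, Finset.sum_div]
  apply Finset.sum_congr rfl
  intro j hj
  have hj1 : j ∈ Finset.range (n + 1) := by simp at hj ⊢; omega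
  have hj2 : j + 1 ∈ Finset.range (n + 1) := by simp at hj ⊢; omega
  rw [Polynomial.eval_mul, Polynomial.eval_C, Polynomial.eval_sub, Polynomial.eval_mul,
    Polynomial.eval_mul, Polynomial.eval_C, Polynomial.eval_C, Polynomial.eval_prod,
    Polynomial.eval_prod]
  have hprod1 : ∏ s ∈ Finset.range (n + 1), (Pg (r + s)).eval (1 - q)
      = (Pg (r + j)).eval (1 - q) *
        ∏ s ∈ (Finset.range (n + 1)).erase j, (Pg (r + s)).eval (1 - q) :=
    (Finset.mul_prod_erase _ _ hj1).symm
  have hprod2 : ∏ s ∈ Finset.range (n + 1), (Pg (r + s)).eval (1 - q)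
      = (Pg (r + (j + 1))).eval (1 - q) *
        ∏ s ∈ (Finset.range (n + 1)).erase (j + 1), (Pg (r + s)).eval (1 - q) :=
    (Finset.mul_prod_erase _ _ hj2).symm
  have hS1 : (0 : ℝ) < (Pg (r + j)).eval (1 - q) := hSpos _ (by omega)
  have hS2 : (0 : ℝ) < (Pg (r + (j + 1))).eval (1 - q) := hSpos _ (by omega)
  have hP1 : (0 : ℝ) < ∏ s ∈ (Finset.range (n + 1)).erase j, (Pg (r + s)).eval (1 - q) := by
    apply Finset.prod_pos
    intro s hs
    exact hSpos _ (by omega)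
  have hP2 : (0 : ℝ) < ∏ s ∈ (Finset.range (n + 1)).erase (j + 1), (Pg (r + s)).eval (1 - q) := by
    apply Finset.prod_pos
    intro s hs
    exact hSpos _ (by omega)
  have e1 : 1 - q ^ (r + j) = (1 - q) * (Pg (r + j)).eval (1 - q) := geom_eval _ q
  have e2 : 1 - q ^ (r + j + 1) = (1 - q) * (Pg (r + (j + 1))).eval (1 - q) := by
    rw [show r + j + 1 = r + (j + 1) from rfl]
    exact geom_eval _ q
  have hpow : (1 - q) ^ n = (1 - q) ^ (n - 1) * (1 - q) := by
    rw [← pow_succ]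
    congr 1
    omega
  have hun1 : (1 - q) ^ (n - 1) ≠ 0 := pow_ne_zero _ hune
  have base : ∀ x S P : ℝ, S ≠ 0 → P ≠ 0 →
      x * P / ((1 - q) ^ n * (S * P)) = x / ((1 - q) ^ (n - 1) * ((1 - q) * S)) := by
    intro x S P hS hP
    rw [hpow]
    field_simp
  have r1 : ((-1 : ℝ) ^ j * ((n - 1).choose j : ℝ) * r) *
        (∏ s ∈ (Finset.range (n + 1)).erase j, (Pg (r + s)).eval (1 - q)) /
        ((1 - q) ^ n * ∏ s ∈ Finset.range (n + 1), (Pg (r + s)).eval (1 - q))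
      = ((-1 : ℝ) ^ j * ((n - 1).choose j : ℝ) * r) /
        ((1 - q) ^ (n - 1) * ((1 - q) * (Pg (r + j)).eval (1 - q))) := by
    rw [hprod1]
    exact base _ _ _ hS1.ne' hP1.ne'
  have r2 : ((-1 : ℝ) ^ j * ((n - 1).choose j : ℝ) * ((n : ℝ) + r)) *
        (∏ s ∈ (Finset.range (n + 1)).erase (j + 1), (Pg (r + s)).eval (1 - q)) /
        ((1 - q) ^ n * ∏ s ∈ Finset.range (n + 1), (Pg (r + s)).eval (1 - q))
      = ((-1 : ℝ) ^ j * ((n - 1).choose j : ℝ) * ((n : ℝ) + r)) /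
        ((1 - q) ^ (n - 1) * ((1 - q) * (Pg (r + (j + 1))).eval (1 - q))) := by
    rw [hprod2]
    exact base _ _ _ hS2.ne' hP2.ne'
  calc (-1 : ℝ) ^ j * ((n - 1).choose j : ℝ) / (1 - q) ^ (n - 1) *
        ((r : ℝ) * (1 - q ^ (r + j))⁻¹ - ((n : ℝ) + r) * (1 - q ^ (r + j + 1))⁻¹)
      = ((-1 : ℝ) ^ j * ((n - 1).choose j : ℝ) * r) /
          ((1 - q) ^ (n - 1) * ((1 - q) * (Pg (r + j)).eval (1 - q)))
        - ((-1 : ℝ) ^ j * ((n - 1).choose j : ℝ) * ((n : ℝ) + r)) /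
          ((1 - q) ^ (n - 1) * ((1 - q) * (Pg (r + (j + 1))).eval (1 - q))) := by
        rw [e1, e2]
        have hS1' : (Pg (r + j)).eval (1 - q) ≠ 0 := hS1.ne'
        have hS2' : (Pg (r + (j + 1))).eval (1 - q) ≠ 0 := hS2.ne'
        field_simp
    _ = ((-1 : ℝ) ^ j * ((n - 1).choose j : ℝ) * r) *
          (∏ s ∈ (Finset.range (n + 1)).erase j, (Pg (r + s)).eval (1 - q)) /
          ((1 - q) ^ n * ∏ s ∈ Finset.range (n + 1), (Pg (r + s)).eval (1 - q))
        - ((-1 : ℝ) ^ j * ((n - 1).choose j : ℝ) * ((n : ℝ) + r)) *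
          (∏ s ∈ (Finset.range (n + 1)).erase (j + 1), (Pg (r + s)).eval (1 - q)) /
          ((1 - q) ^ n * ∏ s ∈ Finset.range (n + 1), (Pg (r + s)).eval (1 - q)) := by
        rw [r1, r2]
    _ = (-1 : ℝ) ^ j * ((n - 1).choose j : ℝ) *
          ((r : ℝ) * ∏ s ∈ (Finset.range (n + 1)).erase j, (Pg (r + s)).eval (1 - q)
            - ((n : ℝ) + r) *
              ∏ s ∈ (Finset.range (n + 1)).erase (j + 1), (Pg (r + s)).eval (1 - q)) /
          ((1 - q) ^ n * ∏ s ∈ Finset.range (n + 1), (Pg (r + s)).eval (1 - q)) := by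
        ring

end QB

theorem bernoulli_as_limit_of_q_series (r n : ℕ) (hr : 1 ≤ r) (hn : 1 ≤ n) :
    Filter.Tendsto
      (fun q : ℝ => ∑' k : ℕ,
        ((r : ℝ) * q ^ (r * k) - ((n : ℝ) + (r : ℝ)) * q ^ ((r + 1) * k)) *
          ((q ^ k - 1) / (q - 1)) ^ (n - 1))
      (nhdsWithin 1 (Set.Ioo (0 : ℝ) 1))
      (nhds ((bernoulli n : ℚ) : ℝ)) := by
  obtain ⟨Dp, hAA⟩ := QB.AA_decomp r n hr hn
  set Bn : ℝ := ((bernoulli n : ℚ) : ℝ) with hBn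
  set Pm : ℝ := ∏ s ∈ Finset.range (n + 1), ((r : ℝ) + s) with hPm
  have hPmpos : 0 < Pm := by
    rw [hPm]
    apply Finset.prod_pos
    intro s _
    have : (1 : ℝ) ≤ (r : ℝ) := by exact_mod_cast hr
    positivity
  set G : ℝ → ℝ := fun q => (Bn * Pm + (1 - q) * Dp.eval (1 - q)) /
      (∏ s ∈ Finset.range (n + 1), (QB.Pg (r + s)).eval (1 - q)) with hG
  have hvalG : ∀ q ∈ Set.Ioo (0 : ℝ) 1,
      (∑' k : ℕ,
        ((r : ℝ) * q ^ (r * k) - ((n : ℝ) + (r : ℝ)) * q ^ ((r + 1) * k)) *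
          ((q ^ k - 1) / (q - 1)) ^ (n - 1)) = G q := by
    intro q hq
    obtain ⟨hq0, hq1⟩ := hq
    rw [QB.tsum_eval r n hr hn q hq0 hq1, hAA]
    have hu : (1 : ℝ) - q ≠ 0 := (sub_pos.2 hq1).ne' 
    have hSpos : ∀ s ∈ Finset.range (n + 1), (0 : ℝ) < (QB.Pg (r + s)).eval (1 - q) := by
      intro s _
      rw [QB.Pg_eval]
      apply Finset.sum_pos
      · intro i _; positivity
      · exact Finset.nonempty_range_iff.2 (by omega)
    have hprodpos : (0 : ℝ) < ∏ s ∈ Finset.range (n + 1), (QB.Pg (r + s)).eval (1 - q) :=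
      Finset.prod_pos hSpos
    rw [hG]
    simp only [Polynomial.eval_add, Polynomial.eval_mul, Polynomial.eval_C,
      Polynomial.eval_pow, Polynomial.eval_X]
    rw [div_eq_div_iff (by positivity) hprodpos.ne']
    rw [pow_succ]
    ring
  have hlim : Filter.Tendsto G (nhds 1) (nhds Bn) := by
    have hnum : Filter.Tendsto (fun q : ℝ => Bn * Pm + (1 - q) * Dp.eval (1 - q))
        (nhds 1) (nhds (Bn * Pm)) := by
      have hc : Continuous (fun q : ℝ => Bn * Pm + (1 - q) * Dp.eval (1 - q)) :=
        continuous_const.add ((continuous_const.sub continuous_id).mul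
          (Dp.continuous.comp (continuous_const.sub continuous_id)))
      have := hc.tendsto 1
      simpa using this
    have hden : Filter.Tendsto (fun q : ℝ => ∏ s ∈ Finset.range (n + 1),
        (QB.Pg (r + s)).eval (1 - q)) (nhds 1) (nhds Pm) := by
      have hc : Continuous (fun q : ℝ => ∏ s ∈ Finset.range (n + 1),
          (QB.Pg (r + s)).eval (1 - q)) := by
        apply continuous_finset_prod
        intro s _
        exact (QB.Pg (r + s)).continuous.comp (continuous_const.sub continuous_id)
      have := hc.tendsto 1
      have hval : ∏ s ∈ Finset.range (n + 1), (QB.Pg (r + s)).eval (1 - 1) = Pm := by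
        rw [hPm]
        apply Finset.prod_congr rfl
        intro s _
        rw [show (1 : ℝ) - 1 = 1 - 1 from rfl, QB.Pg_eval (r + s) 1]
        simp
      rw [hval] at this
      exact this
    have := hnum.div hden hPmpos.ne'
    have hBn' : Bn * Pm / Pm = Bn := mul_div_cancel_right₀ Bn hPmpos.ne'
    rw [hBn'] at this
    exact this
  have : Filter.Tendsto G (nhdsWithin 1 (Set.Ioo (0 : ℝ) 1)) (nhds Bn) :=
    hlim.mono_left nhdsWithin_le_nhds
  apply Filter.Tendsto.congr' _ this
  filter_upwards [self_mem_nhdsWithin] with q hq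
  exact (hvalG q hq).symm
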